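/- For every a ≥ 2 and k ≥ 1, the de Bruijn graph G(a,k) contains a directed Hamilton cycle. -/

import Mathlib

/-- Arc of the de Bruijn graph `G(a,k)`: there is an arc from `x` to `y` iff
`y` is obtained from `x` by a left shift (the first `k-1` symbols of `y` are
the last `k-1` symbols of `x`). -/
def dbArc (a k : ℕ) (x y : Fin k → Fin a) : Prop :=
  ∀ (i : ℕ) (h : i + 1 < k), y ⟨i, Nat.lt_of_succ_lt h⟩ = x ⟨i + 1, h⟩

/-- A closed directed walk of length `n` in a digraph with adjacency `Adj`,
encoded as an `n`-periodic sequence of vertices with consecutive arcs. -/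
def IsClosedWalk {V : Type*} (Adj : V → V → Prop) (n : ℕ) (w : ℕ → V) : Prop :=
  0 < n ∧ (∀ i, w (i + n) = w i) ∧ ∀ i, Adj (w i) (w (i + 1))

/-- The walk `w` dominates the digraph: every vertex lies on the walk or is an
out-neighbour of a vertex on the walk. -/
def Dominates {V : Type*} (Adj : V → V → Prop) (w : ℕ → V) : Prop :=
  ∀ v, (∃ i, w i = v) ∨ ∃ i, Adj (w i) v

set_option linter.unusedVariables false


section Euler

open List Finset

set_option linter.unusedSectionVars false

variable {E V : Type*} [DecidableEq E] [DecidableEq V]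

variable (tl hd : E → V)

/-- A trail using edges from `S`. -/
def IsTrailOn (S : Finset E) (l : List E) : Prop :=
  l ≠ [] ∧ l.Nodup ∧ (∀ e ∈ l, e ∈ S) ∧ l.Chain' (fun e f => hd e = tl f)

/-- A closed trail using edges from `S`. -/
def IsClosedOn (S : Finset E) (l : List E) : Prop :=
  IsTrailOn tl hd S l ∧ ∀ (hl : l ≠ []), hd (l.getLast hl) = tl (l.head hl)

/-- Every vertex has equal in- and out-degree within `S`. -/
def IsBalanced (S : Finset E) : Prop :=
  ∀ v, (S.filter fun e => tl e = v).card = (S.filter fun e => hd e = v).card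

lemma count_key (v : V) :
    ∀ (l : List E) (e : E), (e :: l).Chain' (fun e f => hd e = tl f) →
      (e :: l).countP (fun f => tl f = v) +
        (if hd ((e :: l).getLast (List.cons_ne_nil e l)) = v then 1 else 0) =
      (e :: l).countP (fun f => hd f = v) + (if tl e = v then 1 else 0) := by
  intro l
  induction l with
  | nil =>
    intro e _
    simp only [List.countP_cons, List.countP_nil, List.getLast_singleton]
    by_cases h1 : tl e = v <;> by_cases h2 : hd e = v <;> simp [h1, h2]
  | cons f l ih =>
    intro e hch
    have h1 : hd e = tl f := (List.isChain_cons_cons.mp hch).1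
    have ih' := ih f (List.isChain_cons_cons.mp hch).2
    rw [← h1] at ih'
    rw [List.countP_cons, List.countP_cons (p := fun f => decide (hd f = v)),
      List.getLast_cons (List.cons_ne_nil f l)]
    by_cases h2 : tl e = v <;> by_cases h3 : hd e = v <;>
      simp [h2, h3] at ih' ⊢ <;> omega


lemma countP_nodup_eq (l : List E) (hnd : l.Nodup) (p : E → Prop) [DecidablePred p] :
    l.countP (fun e => p e) = (l.toFinset.filter p).card := by
  rw [List.countP_eq_length_filter, ← List.toFinset_card_of_nodup (hnd.filter _),
    List.toFinset_filter]
  congr 1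
  simp

lemma countP_le_filter (S : Finset E) (l : List E) (hnd : l.Nodup) (hsub : ∀ e ∈ l, e ∈ S)
    (p : E → Prop) [DecidablePred p] :
    l.countP (fun e => p e) ≤ (S.filter p).card := by
  rw [countP_nodup_eq l hnd p]
  exact Finset.card_le_card (Finset.filter_subset_filter _ (fun e he => hsub e (List.mem_toFinset.mp he)))


lemma extend_or_closed (S : Finset E) (hbal : IsBalanced tl hd S) (e : E) (l : List E)
    (ht : IsTrailOn tl hd S (e :: l)) :
    hd ((e :: l).getLast (List.cons_ne_nil e l)) = tl e ∨
      ∃ f, f ∈ S ∧ f ∉ (e :: l) ∧ tl f = hd ((e :: l).getLast (List.cons_ne_nil e l)) := by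
  obtain ⟨-, hnd, hsub, hch⟩ := ht
  by_cases hcl : hd ((e :: l).getLast (List.cons_ne_nil e l)) = tl e
  · exact Or.inl hcl
  right
  by_contra hno
  push_neg at hno
  set vm := hd ((e :: l).getLast (List.cons_ne_nil e l)) with hvm
  have hall : ∀ f ∈ S, tl f = vm → f ∈ (e :: l) := by
    intro f hf htf
    by_contra hfl
    exact hno f hf hfl htf
  have key := count_key tl hd vm (l) e hch
  have hA : (e :: l).countP (fun f => tl f = vm) = (S.filter fun f => tl f = vm).card := by
    rw [countP_nodup_eq _ hnd]
    congr 1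
    apply Finset.Subset.antisymm
    · exact Finset.filter_subset_filter _ (fun f hf => hsub f (List.mem_toFinset.mp hf))
    · intro f hf
      rw [Finset.mem_filter] at hf ⊢
      exact ⟨List.mem_toFinset.mpr (hall f hf.1 hf.2), hf.2⟩
  have hB := countP_le_filter S (e :: l) hnd hsub (fun f => hd f = vm)
  have hbal' := hbal vm
  rw [if_pos rfl, if_neg (fun hh => hcl (hvm ▸ hh.symm))] at key
  omega

lemma exists_closed (S : Finset E) (hbal : IsBalanced tl hd S) :
    ∀ (n : ℕ) (e : E) (l : List E), IsTrailOn tl hd S (e :: l) →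
      S.card ≤ (e :: l).length + n →
      ∃ c, IsClosedOn tl hd S (e :: c) := by
  intro n
  induction n with
  | zero =>
    intro e l ht hlen
    rcases extend_or_closed tl hd S hbal e l ht with hcl | ⟨f, hfS, hfl, -⟩
    · exact ⟨l, ht, fun _ => by rwa [List.head_cons]⟩
    · exfalso
      obtain ⟨-, hnd, hsub, -⟩ := ht
      have h1 : ((e :: l).toFinset).card = (e :: l).length := List.toFinset_card_of_nodup hnd
      have h2 : insert f (e :: l).toFinset ⊆ S := by
        intro x hx
        rcases Finset.mem_insert.mp hx with rfl | hx
        · exact hfS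
        · exact hsub x (List.mem_toFinset.mp hx)
      have h3 := Finset.card_le_card h2
      rw [Finset.card_insert_of_notMem (fun hc => hfl (List.mem_toFinset.mp hc))] at h3
      omega
  | succ n ih =>
    intro e l ht hlen
    rcases extend_or_closed tl hd S hbal e l ht with hcl | ⟨f, hfS, hfl, hftl⟩
    · exact ⟨l, ht, fun _ => by rwa [List.head_cons]⟩
    · obtain ⟨-, hnd, hsub, hch⟩ := ht
      have heq : e :: (l ++ [f]) = (e :: l) ++ [f] := by simp
      have ht' : IsTrailOn tl hd S (e :: (l ++ [f])) := by
        refine ⟨List.cons_ne_nil _ _, ?_, ?_, ?_⟩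
        · rw [heq]
          exact List.Nodup.append hnd (List.nodup_singleton f)
            (by intro x hx hx'; rw [List.mem_singleton] at hx'; exact hfl (hx' ▸ hx))
        · intro x hx
          rw [heq, List.mem_append] at hx
          rcases hx with hx | hx
          · exact hsub x hx
          · rw [List.mem_singleton] at hx; exact hx ▸ hfS
        · rw [heq]
          refine List.isChain_append.mpr ⟨hch, List.isChain_singleton f, ?_⟩
          intro x hx y hy
          rw [List.getLast?_eq_getLast (h := List.cons_ne_nil e l), Option.mem_def,
            Option.some_inj] at hx
          rw [List.head?_cons, Option.mem_def, Option.some_inj] at hy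
          rw [← hx, ← hy] at *
          exact hftl.symm
      have hlen' : S.card ≤ (e :: (l ++ [f])).length + n := by
        simp only [List.length_cons, List.length_append, List.length_singleton] at hlen ⊢
        omega
      exact ih e (l ++ [f]) ht' hlen'


/-- Cyclic chain condition, index form. -/
def IsCyc (l : List E) : Prop :=
  ∀ (i : ℕ) (hi : i < l.length),
    hd (l.get ⟨i, hi⟩) =
      tl (l.get ⟨(i + 1) % l.length, Nat.mod_lt _ (Nat.lt_of_le_of_lt (Nat.zero_le i) hi)⟩)

lemma isCyc_of_closed {S : Finset E} {l : List E} (hc : IsClosedOn tl hd S l) :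
    IsCyc tl hd l := by
  obtain ⟨⟨hne, -, -, hch⟩, hwrap⟩ := hc
  intro i hi
  rcases Nat.lt_or_ge (i + 1) l.length with hi1 | hi1
  · have := List.isChain_iff_getElem.mp hch i (by omega)
    simp only [List.get_eq_getElem, Nat.mod_eq_of_lt hi1]
    exact this
  · have hlast : i = l.length - 1 := by omega
    have hmod : (i + 1) % l.length = 0 := by
      have : i + 1 = l.length := by omega
      simp [this]
    have h1 : l.get ⟨i, hi⟩ = l.getLast hne := by
      rw [List.getLast_eq_getElem, List.get_eq_getElem]
      congr 1
    have h2 : l.get ⟨(i + 1) % l.length, Nat.mod_lt _ (Nat.lt_of_le_of_lt (Nat.zero_le i) hi)⟩ = l.head hne := by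
      rw [List.head_eq_getElem_zero hne, List.get_eq_getElem]
      congr 1
    rw [h1, h2]
    exact hwrap hne

lemma closed_of_isCyc {S : Finset E} {l : List E} (hne : l ≠ []) (hnd : l.Nodup)
    (hsub : ∀ e ∈ l, e ∈ S) (hcyc : IsCyc tl hd l) : IsClosedOn tl hd S l := by
  have hpos : 0 < l.length := List.length_pos_iff.mpr hne
  refine ⟨⟨hne, hnd, hsub, ?_⟩, ?_⟩
  · refine List.isChain_iff_getElem.mpr ?_
    intro i hi
    have := hcyc i (by omega)
    simp only [List.get_eq_getElem, Nat.mod_eq_of_lt hi] at this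
    exact this
  · intro _
    have := hcyc (l.length - 1) (by omega)
    have hmod : (l.length - 1 + 1) % l.length = 0 := by
      have : l.length - 1 + 1 = l.length := by omega
      simp [this]
    rw [List.getLast_eq_getElem, List.head_eq_getElem_zero hne]
    simp only [List.get_eq_getElem, hmod] at this
    exact this

lemma isCyc_rotate {l : List E} (hcyc : IsCyc tl hd l) (n : ℕ) :
    IsCyc tl hd (l.rotate n) := by
  intro i hi
  rw [List.length_rotate] at hi
  have hpos : 0 < l.length := Nat.lt_of_le_of_lt (Nat.zero_le i) hi
  rw [List.get_rotate, List.get_rotate]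
  have hmm : ((i + 1) % (l.rotate n).length + n) % l.length = ((i + n) % l.length + 1) % l.length := by
    rw [List.length_rotate]
    have h1 : ((i + 1) % l.length + n) % l.length = (i + 1 + n) % l.length :=
      Nat.ModEq.add_right n (Nat.mod_modEq (i + 1) l.length)
    have h2 : ((i + n) % l.length + 1) % l.length = (i + n + 1) % l.length :=
      Nat.ModEq.add_right 1 (Nat.mod_modEq (i + n) l.length)
    rw [h1, h2]
    congr 1
    omega
  have := hcyc ((i + n) % l.length) (Nat.mod_lt _ hpos)
  convert this using 3
  exact Fin.ext hmm


lemma closed_rotate {S : Finset E} {l : List E} (hc : IsClosedOn tl hd S l) (n : ℕ) :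
    IsClosedOn tl hd S (l.rotate n) := by
  have hcyc := isCyc_rotate tl hd (isCyc_of_closed tl hd hc) n
  obtain ⟨⟨hne, hnd, hsub, -⟩, -⟩ := hc
  refine closed_of_isCyc tl hd ?_ (List.nodup_rotate.mpr hnd)
    (fun e he => hsub e (List.mem_rotate.mp he)) hcyc
  intro hcon
  apply hne
  have := List.length_rotate l n
  rw [hcon] at this
  exact List.length_eq_zero_iff.mp this.symm

lemma closed_append {S : Finset E} {l1 l2 : List E}
    (h1 : IsClosedOn tl hd S l1) (h2 : IsClosedOn tl hd S l2)
    (hdisj : ∀ e ∈ l1, e ∉ l2)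
    (hstart : ∀ (hn1 : l1 ≠ []) (hn2 : l2 ≠ []), tl (l1.head hn1) = tl (l2.head hn2)) :
    IsClosedOn tl hd S (l1 ++ l2) := by
  obtain ⟨⟨hne1, hnd1, hsub1, hch1⟩, hwrap1⟩ := h1
  obtain ⟨⟨hne2, hnd2, hsub2, hch2⟩, hwrap2⟩ := h2
  have hne : l1 ++ l2 ≠ [] := fun hc => hne1 (List.append_eq_nil_iff.mp hc).1
  refine ⟨⟨hne, List.Nodup.append hnd1 hnd2 hdisj, ?_, ?_⟩, ?_⟩
  · intro e he
    rcases List.mem_append.mp he with he | he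
    · exact hsub1 e he
    · exact hsub2 e he
  · refine List.isChain_append.mpr ⟨hch1, hch2, ?_⟩
    intro x hx y hy
    rw [List.getLast?_eq_getLast (h := hne1), Option.mem_def, Option.some_inj] at hx
    rw [List.head?_eq_head hne2, Option.mem_def, Option.some_inj] at hy
    rw [← hx, ← hy, hwrap1 hne1]
    exact hstart hne1 hne2
  · intro _
    rw [List.getLast_append_of_right_ne_nil l1 l2 hne2, List.head_append_left hne1, hwrap2 hne2]
    exact (hstart hne1 hne2).symm


lemma balanced_sdiff {S : Finset E} (hbal : IsBalanced tl hd S) {c : List E}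
    (hc : IsClosedOn tl hd S c) : IsBalanced tl hd (S \ c.toFinset) := by
  intro v
  obtain ⟨⟨hne, hnd, hsub, hch⟩, hwrap⟩ := hc
  obtain ⟨e, l, rfl⟩ : ∃ e l, c = e :: l := by
    cases c with
    | nil => exact absurd rfl hne
    | cons e l => exact ⟨e, l, rfl⟩
  have key := count_key tl hd v l e hch
  rw [hwrap (List.cons_ne_nil e l), List.head_cons] at key
  have hcount : (e :: l).countP (fun f => tl f = v) = (e :: l).countP (fun f => hd f = v) :=
    Nat.add_right_cancel key
  rw [countP_nodup_eq _ hnd, countP_nodup_eq _ hnd] at hcount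
  have hsub' : (e :: l).toFinset ⊆ S := fun x hx => hsub x (List.mem_toFinset.mp hx)
  have hfe : ∀ (p : E → Prop) [DecidablePred p],
      ((S \ (e :: l).toFinset).filter p) = S.filter p \ ((e :: l).toFinset.filter p) := by
    intro p _
    ext x
    simp only [Finset.mem_filter, Finset.mem_sdiff]
    tauto
  rw [hfe, hfe, Finset.card_sdiff_of_subset (Finset.filter_subset_filter _ hsub'),
    Finset.card_sdiff_of_subset (Finset.filter_subset_filter _ hsub'), hcount, hbal v]

lemma head_mem_tails {S : Finset E} {c : List E} (hc : IsClosedOn tl hd S c) {g : E}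
    (hg : g ∈ c) : ∃ (j : ℕ) (hj : j < c.length), tl (c.get ⟨j, hj⟩) = hd g := by
  have hcyc := isCyc_of_closed tl hd hc
  obtain ⟨i, rfl⟩ := List.mem_iff_get.mp hg
  exact ⟨(i + 1) % c.length, Nat.mod_lt _ (Nat.lt_of_le_of_lt (Nat.zero_le _) i.isLt),
    (by have := hcyc i i.isLt; rw [← this])⟩

lemma exists_exit {S : Finset E} {c : List E} (hc : IsClosedOn tl hd S c) :
    ∀ (p : List E) (f : E), (f :: p).Chain' (fun e f => hd e = tl f) →
      (∃ j hj, tl (c.get ⟨j, hj⟩) = tl f) →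
      ((f :: p).getLast (List.cons_ne_nil f p)) ∉ c →
      ∃ g, g ∉ c ∧ ∃ j hj, tl (c.get ⟨j, hj⟩) = tl g := by
  intro p
  induction p with
  | nil =>
    intro f _ hstart hlast
    exact ⟨f, by simpa using hlast, hstart⟩
  | cons f' p ih =>
    intro f hch hstart hlast
    by_cases hf : f ∈ c
    · have hst' : ∃ j hj, tl (c.get ⟨j, hj⟩) = tl f' := by
        obtain ⟨j, hj, hjf⟩ := head_mem_tails tl hd hc hf
        exact ⟨j, hj, hjf.trans (List.isChain_cons_cons.mp hch).1⟩
      exact ih f' (List.isChain_cons_cons.mp hch).2 hst'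
        (by rwa [List.getLast_cons (List.cons_ne_nil f' p)] at hlast)
    · exact ⟨f, hf, hstart⟩

theorem euler_aux [Fintype E] (hbal : IsBalanced tl hd (Finset.univ : Finset E))
    (hconn : ∀ (v : V) (e : E), ∃ (f : E) (p : List E),
      (f :: p).Chain' (fun e f => hd e = tl f) ∧ tl f = v ∧
        (f :: p).getLast (List.cons_ne_nil f p) = e) :
    ∀ (n : ℕ) (c : List E), IsClosedOn tl hd Finset.univ c →
      Fintype.card E ≤ c.length + n →
      ∃ l : List E, IsClosedOn tl hd Finset.univ l ∧ ∀ e : E, e ∈ l := by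
  intro n
  induction n with
  | zero =>
    intro c hc hlen
    refine ⟨c, hc, ?_⟩
    obtain ⟨⟨hne, hnd, hsub, -⟩, -⟩ := hc
    have h1 : c.toFinset.card = c.length := List.toFinset_card_of_nodup hnd
    have h2 : c.toFinset = Finset.univ := by
      apply Finset.eq_univ_of_card
      have h3 := Finset.card_le_univ c.toFinset
      omega
    intro e
    exact List.mem_toFinset.mp (h2.symm ▸ Finset.mem_univ e)
  | succ n ih =>
    intro c hc hlen
    by_cases hall : ∀ e : E, e ∈ c
    · exact ⟨c, hc, hall⟩
    push_neg at hall
    obtain ⟨e, he⟩ := hall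
    have hne : c ≠ [] := hc.1.1
    have hpos : 0 < c.length := List.length_pos_iff.mpr hne
    obtain ⟨f, p, hch, hstart, hlast⟩ := hconn (tl (c.head hne)) e
    have hstart' : ∃ j hj, tl (c.get ⟨j, hj⟩) = tl f := by
      refine ⟨0, hpos, ?_⟩
      rw [hstart, List.get_eq_getElem, ← List.head_eq_getElem_zero hne]
    obtain ⟨g, hgc, j, hj, hjg⟩ := exists_exit tl hd hc p f hch hstart' (hlast ▸ he)
    -- closed trail in the complement starting at g
    have hbal' := balanced_sdiff tl hd hbal hc
    have hgS' : g ∈ (Finset.univ : Finset E) \ c.toFinset :=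
      Finset.mem_sdiff.mpr ⟨Finset.mem_univ g, fun hx => hgc (List.mem_toFinset.mp hx)⟩
    obtain ⟨c2tail, hc2⟩ := exists_closed tl hd _ hbal'
      ((Finset.univ \ c.toFinset).card) g []
      ⟨List.cons_ne_nil g [], List.nodup_singleton g,
        fun x hx => (List.mem_singleton.mp hx) ▸ hgS', List.isChain_singleton g⟩
      (by simp)
    set c2 := g :: c2tail with hc2def
    have hc2sub : ∀ x ∈ c2, x ∉ c := by
      intro x hx hxc
      have := hc2.1.2.2.1 x hx
      exact (Finset.mem_sdiff.mp this).2 (List.mem_toFinset.mpr hxc)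
    -- rotate c to start at vertex tl g
    set D := c.rotate j with hDdef
    have hD : IsClosedOn tl hd Finset.univ D := closed_rotate tl hd hc j
    have hDne : D ≠ [] := hD.1.1
    have hDhead : tl (D.head hDne) = tl g := by
      have h0 : (0 : ℕ) < D.length := List.length_pos_iff.mpr hDne
      have : D.head hDne = D.get ⟨0, h0⟩ := by
        rw [List.get_eq_getElem, ← List.head_eq_getElem_zero hDne]
      rw [this, List.get_rotate]
      have : ((⟨0, h0⟩ : Fin D.length) + j) % c.length = j := by
        simp only [Fin.val_mk, Nat.zero_add]
        exact Nat.mod_eq_of_lt hj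
      rw [← hjg]
      congr 1
      exact congrArg c.get (Fin.ext (by simpa using Nat.mod_eq_of_lt hj))
    -- c2 is a closed trail on univ as well
    have hc2univ : IsClosedOn tl hd Finset.univ c2 := by
      obtain ⟨⟨h1, h2, h3, h4⟩, h5⟩ := hc2
      exact ⟨⟨h1, h2, fun x _ => Finset.mem_univ x, h4⟩, h5⟩
    have hmerge : IsClosedOn tl hd Finset.univ (D ++ c2) := by
      refine closed_append tl hd hD hc2univ ?_ ?_
      · intro x hx hx2
        exact hc2sub x hx2 (List.mem_rotate.mp hx)
      · intro hn1 hn2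
        rw [hDhead]
        rfl
    refine ih (D ++ c2) hmerge ?_
    rw [List.length_append, List.length_rotate]
    have : 0 < c2.length := List.length_pos_iff.mpr hc2.1.1
    omega

theorem exists_euler [Fintype E] [Nonempty E]
    (hbal : IsBalanced tl hd (Finset.univ : Finset E))
    (hconn : ∀ (v : V) (e : E), ∃ (f : E) (p : List E),
      (f :: p).Chain' (fun e f => hd e = tl f) ∧ tl f = v ∧
        (f :: p).getLast (List.cons_ne_nil f p) = e) :
    ∃ l : List E, IsClosedOn tl hd Finset.univ l ∧ ∀ e : E, e ∈ l := by
  obtain ⟨e0⟩ := (inferInstance : Nonempty E)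
  obtain ⟨c0tail, hc0⟩ := exists_closed tl hd Finset.univ hbal (Fintype.card E) e0 []
    ⟨List.cons_ne_nil e0 [], List.nodup_singleton e0,
      fun x _ => Finset.mem_univ x, List.isChain_singleton e0⟩
    (by simp [Finset.card_univ])
  exact euler_aux tl hd hbal hconn (Fintype.card E) (e0 :: c0tail) hc0
    (by omega)

end Euler

section DeBruijn

variable {a m : ℕ}

/-- The `j`-th edge of the standard walk from vertex `v` to the edge `e`
in the de Bruijn graph `G(a,m)`. -/
def dbW (v : Fin m → Fin a) (e : Fin (m + 1) → Fin a) (j : ℕ) : Fin (m + 1) → Fin a :=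
  fun i => if hij : (i : ℕ) + j < m then v ⟨(i : ℕ) + j, hij⟩
    else e ⟨((i : ℕ) + j - m) % (m + 1), Nat.mod_lt _ (Nat.succ_pos m)⟩

lemma dbW_zero (v : Fin m → Fin a) (e : Fin (m + 1) → Fin a) :
    (fun i : Fin m => dbW v e 0 i.castSucc) = v := by
  funext i
  have h1 : ((i.castSucc : Fin (m + 1)) : ℕ) + 0 < m := by
    simp only [Fin.coe_castSucc, Nat.add_zero]
    exact i.isLt
  simp only [dbW, dif_pos h1]
  exact congrArg v (Fin.ext (by simp))

lemma dbW_last (v : Fin m → Fin a) (e : Fin (m + 1) → Fin a) :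
    dbW v e m = e := by
  funext i
  have h1 : ¬ ((i : ℕ) + m < m) := by omega
  simp only [dbW, dif_neg h1]
  refine congrArg e (Fin.ext ?_)
  simp only
  rw [Nat.add_sub_cancel, Nat.mod_eq_of_lt i.isLt]

lemma dbW_step (v : Fin m → Fin a) (e : Fin (m + 1) → Fin a) (j : ℕ) :
    (fun i : Fin m => dbW v e j i.succ) = (fun i : Fin m => dbW v e (j + 1) i.castSucc) := by
  funext i
  have h1 : ((i.succ : Fin (m + 1)) : ℕ) + j = (i : ℕ) + 1 + j := rfl
  have h2 : ((i.castSucc : Fin (m + 1)) : ℕ) + (j + 1) = (i : ℕ) + 1 + j := by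
    simp only [Fin.coe_castSucc]
    omega
  simp only [dbW]
  split_ifs with ha1 ha2 ha2
  · exact congrArg v (Fin.ext (h1.trans h2.symm))
  · rw [h1] at ha1; rw [h2] at ha2; omega
  · rw [h1] at ha1; rw [h2] at ha2; omega
  · refine congrArg e (Fin.ext ?_)
    simp only
    rw [h1, h2]

lemma db_tl_card (ha : 0 < a) (v : Fin m → Fin a) :
    (Finset.univ.filter fun e : Fin (m + 1) → Fin a =>
      (fun i : Fin m => e i.castSucc) = v).card = a := by
  have himg : (Finset.univ.filter fun e : Fin (m + 1) → Fin a =>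
      (fun i : Fin m => e i.castSucc) = v) =
      Finset.image (fun x : Fin a => Fin.snoc v x) Finset.univ := by
    ext e
    simp only [Finset.mem_filter, Finset.mem_univ, true_and, Finset.mem_image]
    constructor
    · intro h
      refine ⟨e (Fin.last m), funext fun i => ?_⟩
      induction i using Fin.lastCases with
      | last => simp [Fin.snoc_last]
      | cast j => rw [Fin.snoc_castSucc]; exact (congrFun h j).symm
    · rintro ⟨x, rfl⟩
      funext j
      simp [Fin.snoc_castSucc]
  rw [himg, Finset.card_image_of_injective _ ?_, Finset.card_univ, Fintype.card_fin]
  intro x y hxy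
  have := congrFun hxy (Fin.last m)
  simpa [Fin.snoc_last] using this

lemma db_hd_card (ha : 0 < a) (v : Fin m → Fin a) :
    (Finset.univ.filter fun e : Fin (m + 1) → Fin a =>
      (fun i : Fin m => e i.succ) = v).card = a := by
  have himg : (Finset.univ.filter fun e : Fin (m + 1) → Fin a =>
      (fun i : Fin m => e i.succ) = v) =
      Finset.image (fun x : Fin a => Fin.cons x v) Finset.univ := by
    ext e
    simp only [Finset.mem_filter, Finset.mem_univ, true_and, Finset.mem_image]
    constructor
    · intro h
      refine ⟨e 0, funext fun i => ?_⟩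
      induction i using Fin.cases with
      | zero => simp [Fin.cons_zero]
      | succ j => rw [Fin.cons_succ]; exact (congrFun h j).symm
    · rintro ⟨x, rfl⟩
      funext j
      simp [Fin.cons_succ]
  rw [himg, Finset.card_image_of_injective _ ?_, Finset.card_univ, Fintype.card_fin]
  intro x y hxy
  have := congrFun hxy 0
  simpa [Fin.cons_zero] using this

lemma db_conn (v : Fin m → Fin a) (e : Fin (m + 1) → Fin a) :
    ∃ (f : Fin (m + 1) → Fin a) (p : List (Fin (m + 1) → Fin a)),
      (f :: p).Chain' (fun x y => (fun i : Fin m => x i.succ) = (fun i : Fin m => y i.castSucc)) ∧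
      (fun i : Fin m => f i.castSucc) = v ∧ (f :: p).getLast (List.cons_ne_nil f p) = e := by
  refine ⟨dbW v e 0, (List.range m).map (fun j => dbW v e (j + 1)), ?_, dbW_zero v e, ?_⟩
  · have heq : dbW v e 0 :: (List.range m).map (fun j => dbW v e (j + 1)) =
        (List.range (m + 1)).map (dbW v e) := by
      rw [List.range_succ_eq_map, List.map_cons, List.map_map]
      rfl
    rw [heq]; refine (List.isChain_map _).mpr ?_
    exact (List.isChain_range_succ _ m).mpr (fun j _ => dbW_step v e j)
  · have heq : dbW v e 0 :: (List.range m).map (fun j => dbW v e (j + 1)) =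
        (List.range (m + 1)).map (dbW v e) := by
      rw [List.range_succ_eq_map, List.map_cons, List.map_map]
      rfl
    have hne : ((List.range (m + 1)).map (dbW v e)) ≠ [] := by simp
    rw [List.getLast_congr _ hne heq]
    rw [List.getLast_eq_getElem]
    simp only [List.length_map, List.length_range, Nat.add_sub_cancel, List.getElem_map,
      List.getElem_range]
    exact dbW_last v e

end DeBruijn

theorem deBruijn_hamiltonCycle' (a k : ℕ) (ha : 2 ≤ a) (hk : 1 ≤ k) :
    ∃ w : ℕ → Fin k → Fin a, IsClosedWalk (dbArc a k) (a ^ k) w ∧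
      ∀ v : Fin k → Fin a, ∃! i : ℕ, i < a ^ k ∧ w i = v := by
  obtain ⟨m, rfl⟩ : ∃ m, k = m + 1 := ⟨k - 1, by omega⟩
  haveI : Nonempty (Fin (m + 1) → Fin a) := ⟨fun _ => ⟨0, by omega⟩⟩
  set tlm : (Fin (m + 1) → Fin a) → (Fin m → Fin a) := fun e i => e i.castSucc with htlm
  set hdm : (Fin (m + 1) → Fin a) → (Fin m → Fin a) := fun e i => e i.succ with hhdm
  have hbal : IsBalanced tlm hdm Finset.univ := by
    intro v
    rw [db_tl_card (by omega) v, db_hd_card (by omega) v]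
  have hconn : ∀ (v : Fin m → Fin a) (e : Fin (m + 1) → Fin a),
      ∃ (f : Fin (m + 1) → Fin a) (p : List (Fin (m + 1) → Fin a)),
        (f :: p).Chain' (fun x y => hdm x = tlm y) ∧ tlm f = v ∧
          (f :: p).getLast (List.cons_ne_nil f p) = e := db_conn
  obtain ⟨l, hl, hall⟩ := exists_euler tlm hdm hbal hconn
  have hne : l ≠ [] := hl.1.1
  have hnd : l.Nodup := hl.1.2.1
  have hlpos : 0 < l.length := List.length_pos_iff.mpr hne
  have hset : l.toFinset = Finset.univ := Finset.eq_univ_iff_forall.mpr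
    (fun e => List.mem_toFinset.mpr (hall e))
  have hlen : l.length = a ^ (m + 1) := by
    have h1 : l.toFinset.card = l.length := List.toFinset_card_of_nodup hnd
    rw [hset, Finset.card_univ] at h1
    rw [← h1]
    simp [Fintype.card_fun]
  have hcyc := isCyc_of_closed tlm hdm hl
  refine ⟨fun i => l.get ⟨i % l.length, Nat.mod_lt _ hlpos⟩, ⟨?_, ?_, ?_⟩, ?_⟩
  · exact Nat.pow_pos (by omega)
  · intro i
    have : i + a ^ (m + 1) = i + l.length := by rw [hlen]
    rw [this]
    exact congrArg l.get (Fin.ext (Nat.add_mod_right i l.length))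
  · intro i q hq
    have hq' : q < m := by omega
    have key : hdm (l.get ⟨i % l.length, Nat.mod_lt _ hlpos⟩) =
        tlm (l.get ⟨(i + 1) % l.length, Nat.mod_lt _ hlpos⟩) := by
      have h0 := hcyc (i % l.length) (Nat.mod_lt _ hlpos)
      have hmod : (i % l.length + 1) % l.length = (i + 1) % l.length :=
        Nat.ModEq.add_right 1 (Nat.mod_modEq i l.length)
      convert h0 using 3
      exact Fin.ext hmod.symm
    have hkey := congrFun key ⟨q, hq'⟩
    -- hkey : l.get ⟨i % len, _⟩ (Fin.succ ⟨q,hq'⟩) = l.get ⟨(i+1) % len, _⟩ (Fin.castSucc ⟨q,hq'⟩)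
    have e1 : (Fin.succ (⟨q, hq'⟩ : Fin m)) = (⟨q + 1, hq⟩ : Fin (m + 1)) := Fin.ext rfl
    have e2 : (Fin.castSucc (⟨q, hq'⟩ : Fin m)) = (⟨q, Nat.lt_of_succ_lt hq⟩ : Fin (m + 1)) :=
      Fin.ext rfl
    rw [htlm, hhdm] at hkey
    simp only at hkey
    rw [e1, e2] at hkey
    exact hkey.symm
  · intro v
    obtain ⟨iv, hiv⟩ := List.mem_iff_get.mp (hall v)
    refine ⟨(iv : ℕ), ⟨by rw [← hlen]; exact iv.isLt, ?_⟩, ?_⟩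
    · rw [← hiv]
      exact congrArg l.get (Fin.ext (Nat.mod_eq_of_lt iv.isLt))
    · rintro i2 ⟨hi2, hw2⟩
      rw [← hlen] at hi2
      have : l.get ⟨i2 % l.length, Nat.mod_lt _ hlpos⟩ = l.get iv := by rw [hiv]; exact hw2
      have := hnd.get_inj_iff.mp this
      have hval := congrArg Fin.val this
      simpa [Nat.mod_eq_of_lt hi2] using hval


/-- For every `a ≥ 2` and `k ≥ 1`, the de Bruijn graph `G(a,k)` has a directed
Hamilton cycle: a closed walk of length `a^k` visiting every vertex exactly once
(within one period). -/
theorem deBruijn_hamiltonCycle (a k : ℕ) (ha : 2 ≤ a) (hk : 1 ≤ k) :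
    ∃ w : ℕ → Fin k → Fin a, IsClosedWalk (dbArc a k) (a ^ k) w ∧
      ∀ v : Fin k → Fin a, ∃! i : ℕ, i < a ^ k ∧ w i = v := by
  exact deBruijn_hamiltonCycle' a k ha hk
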